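/- Let (2P_1+P_3)^b be the labelled bipartite graph consisting of two isolated black vertices together with a path on three vertices whose two endpoints are black and whose middle vertex is white. Let G be a bipartite graph with a bipartition (B, W) into independent sets such that |B| ≥ 4 and (2P_1+P_3)^b is not a labelled induced subgraph of (B, W, E_G). Let W' be the set of vertices of W adjacent to all but at most one vertex of B, and let G_1 be the graph obtained from G by a bipartite complementation between W' and B (replacing every edge with one endpoint in W' and the other in B by a non-edge and vice versa). Then every vertex of W has at most one neighbour in G_1; in particular, G_1 is a disjoint union of stars. -/

import Mathlib

open SimpleGraph

/-- `B` is the black colour class of a black-and-white labelling of `H`: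
every edge of `H` joins a vertex of `B` to a vertex outside `B`
(equivalently, `B` and its complement `Bᶜ` are both independent sets,
i.e. `(B, Bᶜ)` is a bipartition of `H` into two possibly empty independent sets). -/
def IsBWLabelling {V : Type*} (H : SimpleGraph V) (B : Set V) : Prop :=
  ∀ ⦃u v : V⦄, H.Adj u v → (u ∈ B ↔ v ∉ B)

/-- `H` with black class `BH` is a labelled induced subgraph of `G` with black class `BG`:
there is an injective map preserving both adjacency and non-adjacency which maps
black vertices to black vertices and white vertices to white vertices. -/
def LabelledIndSubgraph {VH VG : Type*} (H : SimpleGraph VH) (BH : Set VH)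
    (G : SimpleGraph VG) (BG : Set VG) : Prop :=
  ∃ f : VH → VG, Function.Injective f ∧
    (∀ u v : VH, H.Adj u v ↔ G.Adj (f u) (f v)) ∧
    (∀ u : VH, u ∈ BH ↔ f u ∈ BG)

/-- `G` is strongly `H^ℓ`-free, where `BH` is the black class of the labelling `ℓ`:
there is no bipartition `(BG, BGᶜ)` of `G` such that `H^ℓ` is a labelled induced
subgraph of `(BG, BGᶜ, E_G)`. -/
def StronglyFree {VG VH : Type*} (G : SimpleGraph VG) (H : SimpleGraph VH)
    (BH : Set VH) : Prop :=
  ¬ ∃ BG : Set VG, IsBWLabelling G BG ∧ LabelledIndSubgraph H BH G BG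

/-- `G` is weakly `H^ℓ`-free, where `BH` is the black class of the labelling `ℓ`:
it is not the case that `H^ℓ` is a labelled induced subgraph of `(BG, BGᶜ, E_G)`
for every bipartition `(BG, BGᶜ)` of `G`. -/
def WeaklyFree {VG VH : Type*} (G : SimpleGraph VG) (H : SimpleGraph VH)
    (BH : Set VH) : Prop :=
  ¬ ∀ BG : Set VG, IsBWLabelling G BG → LabelledIndSubgraph H BH G BG

/-- `G` is `H`-free: `G` contains no induced subgraph isomorphic to `H`. -/
def HFree {VG VH : Type*} (G : SimpleGraph VG) (H : SimpleGraph VH) : Prop :=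
  ¬ ∃ f : VH → VG, Function.Injective f ∧ ∀ u v : VH, H.Adj u v ↔ G.Adj (f u) (f v)

/-- The graph obtained from `G` by a bipartite complementation between the disjoint
vertex subsets `X` and `Y`: every edge with one endpoint in `X` and the other in `Y`
is replaced by a non-edge and vice versa; all other adjacencies are unchanged. -/
def bipComplementation {V : Type*} (G : SimpleGraph V) (X Y : Set V) :
    SimpleGraph V where
  Adj u v :=
    (((u ∈ X ∧ v ∈ Y) ∨ (v ∈ X ∧ u ∈ Y)) ∧ u ≠ v ∧ ¬ G.Adj u v) ∨
    (¬ ((u ∈ X ∧ v ∈ Y) ∨ (v ∈ X ∧ u ∈ Y)) ∧ G.Adj u v)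
  symm := by
    constructor
    intro u v h
    rcases h with ⟨hc, hne, hna⟩ | ⟨hc, ha⟩
    · exact Or.inl ⟨hc.symm, hne.symm, fun h => hna h.symm⟩
    · exact Or.inr ⟨fun h => hc h.symm, ha.symm⟩
  loopless := by
    constructor
    intro u h
    rcases h with ⟨_, hne, _⟩ | ⟨_, ha⟩
    · exact hne rfl
    · exact G.irrefl ha

/-- The graph `2P_1 + P_3`: two isolated vertices `0, 1` and the path `2-3-4`.
In the labelling `(2P_1+P_3)^b` the vertices `0, 1, 2, 4` are black and the
middle vertex `3` of the path is white. -/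
def g2P1'P3 : SimpleGraph (Fin 5) := SimpleGraph.fromEdgeSet {s(2, 3), s(3, 4)}

/-- The star `K_{1,r}`: the centre `0` is adjacent to the `r` leaves. -/
def starGraph (r : ℕ) : SimpleGraph (Fin (r + 1)) :=
  SimpleGraph.fromRel (fun a _ => a = 0)

lemma walk_mem_closed {V : Type*} {G : SimpleGraph V} {S : Set V}
    (hS : ∀ u v, u ∈ S → G.Adj u v → v ∈ S) :
    ∀ {u v : V}, G.Walk u v → u ∈ S → v ∈ S := by
  intro u v p
  induction p with
  | nil => exact id
  | cons h p ih => exact fun hu => ih (hS _ _ hu h)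

lemma iso_star_zero {V : Type*} (G : SimpleGraph V) (v₀ : V) :
    Nonempty (G.induce ({v₀} : Set V) ≃g _root_.starGraph 0) := by
  have : Unique (Fin (0 + 1)) := ⟨⟨0⟩, by decide⟩
  refine ⟨⟨Equiv.ofUnique _ _, ?_⟩⟩
  intro a b
  have h1 : a = b := Subsingleton.elim a b
  subst h1
  constructor
  · intro h; exact absurd h (_root_.starGraph 0).irrefl
  · intro h; exact absurd h (G.induce _).irrefl

lemma iso_star {V : Type*} [Fintype V] (G : SimpleGraph V) (B : Set V)
    (h1 : ∀ ⦃u v : V⦄, G.Adj u v → (u ∈ B ↔ v ∉ B)) (b : V) (hb : b ∈ B) :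
    ∃ r, Nonempty (G.induce (insert b {v | G.Adj b v}) ≃g _root_.starGraph r) := by
  classical
  set N : Set V := {v | G.Adj b v} with hN
  have hbN : b ∉ N := fun h => G.irrefl h
  have hNfin : N.Finite := Set.toFinite N
  have : Fintype ↥N := hNfin.fintype
  set r := N.ncard with hr
  have hcard : Fintype.card ↥N = r := by
    rw [hr, ← Nat.card_coe_set_eq, Nat.card_eq_fintype_card]
  set e : ↥N ≃ Fin r := Fintype.equivFinOfCardEq hcard with he
  set E : ↥(insert b N) ≃ Fin (r + 1) :=
    ((Set.subtypeInsertEquivOption hbN).trans e.optionCongr).trans (finSuccEquiv r).symm with hE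
  have hkey : ∀ u : ↥(insert b N), E u = 0 ↔ (u : V) = b := by
    intro u
    simp only [hE, Equiv.trans_apply, Set.subtypeInsertEquivOption, Equiv.coe_fn_mk]
    split
    · rename_i h
      simp [h]
    · rename_i h
      simp only [Equiv.optionCongr_apply, Option.map_some, finSuccEquiv_symm_some]
      exact ⟨fun hc => absurd hc (Fin.succ_ne_zero _), fun hc => absurd hc h⟩
  refine ⟨r, ⟨⟨E, ?_⟩⟩⟩
  intro u v
  -- goal: (starGraph r).Adj (E u) (E v) ↔ (G.induce _).Adj u v
  have hmem : ∀ x : ↥(insert b N), (x : V) = b ∨ (x : V) ∈ N := fun x => x.2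
  constructor
  · intro h
    have hadj : E u ≠ E v ∧ (E u = 0 ∨ E v = 0) := by
      simpa [_root_.starGraph, SimpleGraph.fromRel_adj, and_comm] using h
    obtain ⟨hne, h0⟩ := hadj
    have huv : (u : V) ≠ (v : V) := fun hc => hne (congrArg E (Subtype.ext hc))
    rcases h0 with h0 | h0
    · have hub : (u : V) = b := (hkey u).mp h0
      have hvN : (v : V) ∈ N := by
        rcases hmem v with h | h
        · exact absurd (Subtype.ext (h.trans hub.symm) : v = u) (fun hc => hne (congrArg E hc).symm)
        · exact h
      show G.Adj u v
      rw [hub]; exact hvN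
    · have hvb : (v : V) = b := (hkey v).mp h0
      have huN : (u : V) ∈ N := by
        rcases hmem u with h | h
        · exact absurd (h.trans hvb.symm) huv
        · exact h
      show G.Adj u v
      rw [hvb]; exact huN.symm
  · intro h
    have hadj : G.Adj (u : V) (v : V) := h
    have huv : (u : V) ≠ (v : V) := hadj.ne
    have hone : (u : V) = b ∨ (v : V) = b := by
      rcases hmem u with h' | h'
      · exact Or.inl h'
      · rcases hmem v with h'' | h''
        · exact Or.inr h''
        · -- both in N: both white, contradiction
          have hu : (u : V) ∉ B := (h1 h').mp hb
          have hv : (v : V) ∉ B := (h1 h'').mp hb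
          exact absurd ((h1 hadj).mpr hv) hu
    have hEne : E u ≠ E v := fun hc => huv (congrArg Subtype.val (E.injective hc))
    have h0 : E u = 0 ∨ E v = 0 := by
      rcases hone with h' | h'
      · exact Or.inl ((hkey u).mpr h')
      · exact Or.inr ((hkey v).mpr h')
    simp only [_root_.starGraph, SimpleGraph.fromRel_adj]
    exact ⟨hEne, by tauto⟩

lemma star_comps {V : Type*} [Fintype V] (G : SimpleGraph V) (B : Set V)
    (h1 : ∀ ⦃u v : V⦄, G.Adj u v → (u ∈ B ↔ v ∉ B))
    (hdeg : ∀ w ∉ B, ({v | G.Adj w v}).ncard ≤ 1) :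
    ∀ c : G.ConnectedComponent,
      ∃ r : ℕ, Nonempty ((G.induce c.supp) ≃g _root_.starGraph r) := by
  classical
  intro c
  induction c using SimpleGraph.ConnectedComponent.ind with
  | _ v₀ =>
  by_cases hiso : ∃ b ∈ B, G.connectedComponentMk b = G.connectedComponentMk v₀
  · obtain ⟨b, hbB, hbc⟩ := hiso
    set N : Set V := {v | G.Adj b v} with hN
    have hclosed : ∀ u v, u ∈ insert b N → G.Adj u v → v ∈ insert b N := by
      intro u v hu huv
      rcases hu with rfl | hu
      · exact Or.inr huv
      · have huB : u ∉ B := (h1 hu).mp hbB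
        have hle := hdeg u huB
        have : v = b := by
          have h := (Set.ncard_le_one (Set.toFinite _)).mp hle v huv b hu.symm
          exact h
        exact Or.inl this
    have hsupp : (G.connectedComponentMk v₀).supp = insert b N := by
      ext x
      rw [ConnectedComponent.mem_supp_iff]
      constructor
      · intro hx
        have hreach : G.Reachable b x :=
          (ConnectedComponent.eq.mp hbc).trans (ConnectedComponent.eq.mp hx).symm
        obtain ⟨p⟩ := hreach
        exact walk_mem_closed hclosed p (Or.inl rfl)
      · intro hx
        rcases hx with rfl | hx
        · exact hbc
        · rw [← hbc]
          exact ConnectedComponent.sound (Reachable.symm ⟨Walk.cons hx Walk.nil⟩)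
    rw [hsupp]
    exact iso_star G B h1 b hbB
  · push_neg at hiso
    have hsupp : (G.connectedComponentMk v₀).supp = {v₀} := by
      ext x
      rw [ConnectedComponent.mem_supp_iff]
      constructor
      · intro hx
        by_contra hne
        have hreach : G.Reachable v₀ x := (ConnectedComponent.eq.mp hx).symm
        obtain ⟨p⟩ := hreach
        cases p with
        | nil => exact hne rfl
        | @cons _ y _ h q =>
          by_cases hv : v₀ ∈ B
          · exact hiso v₀ hv rfl
          · have hy : y ∈ B := by
              by_contra hyB
              exact hv ((h1 h).mpr hyB)
            exact hiso y hy
              (ConnectedComponent.sound (Reachable.symm ⟨Walk.cons h Walk.nil⟩))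
      · rintro rfl; rfl
    rw [hsupp]
    exact ⟨0, iso_star_zero G v₀⟩

/-- Let `G` be a bipartite graph with bipartition `(B, Bᶜ)` such that `|B| ≥ 4` and
`(2P_1+P_3)^b` is not a labelled induced subgraph of `(B, Bᶜ, E_G)`. Let `W'` be the
set of white vertices adjacent to all but at most one vertex of `B`, and let `G₁` be
obtained from `G` by a bipartite complementation between `W'` and `B`. Then every
white vertex has at most one neighbour in `G₁`; in particular, `G₁` is a disjoint
union of stars. -/
theorem stmt_16 {V : Type*} [Fintype V] (G : SimpleGraph V) (B : Set V)
    (hB : IsBWLabelling G B) (hBcard : 4 ≤ B.ncard)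
    (hfree : ¬ LabelledIndSubgraph g2P1'P3 ({0, 1, 2, 4} : Set (Fin 5)) G B)
    (W' : Set V) (hW' : W' = {w | w ∉ B ∧ ({b ∈ B | ¬ G.Adj w b}).ncard ≤ 1})
    (G₁ : SimpleGraph V) (hG₁ : G₁ = bipComplementation G W' B) :
    (∀ w ∉ B, ({v | G₁.Adj w v}).ncard ≤ 1) ∧
    (∀ c : G₁.ConnectedComponent,
      ∃ r : ℕ, Nonempty ((G₁.induce c.supp) ≃g _root_.starGraph r)) := by
  classical
  have hW'w : ∀ x ∈ W', x ∉ B := by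
    intro x hx; rw [hW'] at hx; exact hx.1
  have hBind : ∀ a ∈ B, ∀ b ∈ B, ¬ G.Adj a b := by
    intro a ha b hb h
    exact (hB h).mp ha hb
  have hG1bw : IsBWLabelling G₁ B := by
    intro u v h
    rw [hG₁] at h
    rcases h with ⟨hc, hne, hna⟩ | ⟨hc, ha⟩
    · rcases hc with ⟨h1, h2⟩ | ⟨h1, h2⟩
      · constructor
        · intro hu; exact absurd hu (hW'w u h1)
        · intro hv; exact absurd h2 hv
      · constructor
        · intro _; exact hW'w v h1
        · intro _; exact h2
    · exact hB ha
  have hdeg : ∀ w ∉ B, ({v | G₁.Adj w v}).ncard ≤ 1 := by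
    intro w hw
    by_cases hwW : w ∈ W'
    · have hsub : {v | G₁.Adj w v} ⊆ {b ∈ B | ¬ G.Adj w b} := by
        intro v hv
        rw [hG₁] at hv
        rcases hv with ⟨hc, hne, hna⟩ | ⟨hc, ha⟩
        · rcases hc with ⟨h1, h2⟩ | ⟨h1, h2⟩
          · exact ⟨h2, hna⟩
          · exact absurd h2 hw
        · have hvB : v ∈ B := by
            by_contra hvB
            exact hw ((hB ha).mpr hvB)
          exact absurd (Or.inl ⟨hwW, hvB⟩) hc
      calc ({v | G₁.Adj w v}).ncard ≤ ({b ∈ B | ¬ G.Adj w b}).ncard :=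
            Set.ncard_le_ncard hsub (Set.toFinite _)
        _ ≤ 1 := by
            rw [hW'] at hwW; exact hwW.2
    · -- w not in W' : at least 2 non-neighbours in B
      have h2non : 1 < ({b ∈ B | ¬ G.Adj w b}).ncard := by
        rw [hW'] at hwW
        simp only [Set.mem_setOf_eq, not_and, not_le] at hwW
        exact hwW hw
      have hAdj1 : ∀ v, G₁.Adj w v → v ∈ B ∧ G.Adj w v := by
        intro v hv
        rw [hG₁] at hv
        rcases hv with ⟨hc, hne, hna⟩ | ⟨hc, ha⟩
        · rcases hc with ⟨h1, _⟩ | ⟨_, h2⟩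
          · exact absurd h1 hwW
          · exact absurd h2 hw
        · refine ⟨?_, ha⟩
          by_contra hvB
          exact absurd ((hB ha).mpr hvB) hw
      by_contra hgt
      push_neg at hgt
      obtain ⟨x, hx, y, hy, hxy⟩ := (Set.one_lt_ncard (Set.toFinite _)).mp hgt
      obtain ⟨u, hu, v, hv, huv⟩ := (Set.one_lt_ncard (Set.toFinite _)).mp h2non
      obtain ⟨hxB, hxA⟩ := hAdj1 x hx
      obtain ⟨hyB, hyA⟩ := hAdj1 y hy
      obtain ⟨huB, huA⟩ := hu
      obtain ⟨hvB, hvA⟩ := hv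
      apply hfree
      set f : Fin 5 → V := ![u, v, x, w, y] with hf
      have hGadj : ∀ a b : Fin 5, g2P1'P3.Adj a b ↔
          ((a = 2 ∧ b = 3) ∨ (a = 3 ∧ b = 2) ∨ (a = 3 ∧ b = 4) ∨ (a = 4 ∧ b = 3)) := by
        intro a b
        fin_cases a <;> fin_cases b <;> simp [g2P1'P3, Sym2.eq_iff]
      -- distinctness
      have nuw : u ≠ w := fun h => hw (h ▸ huB)
      have nvw : v ≠ w := fun h => hw (h ▸ hvB)
      have nxw : x ≠ w := fun h => hw (h ▸ hxB)
      have nyw : y ≠ w := fun h => hw (h ▸ hyB)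
      have nux : u ≠ x := fun h => huA (h ▸ hxA)
      have nuy : u ≠ y := fun h => huA (h ▸ hyA)
      have nvx : v ≠ x := fun h => hvA (h ▸ hxA)
      have nvy : v ≠ y := fun h => hvA (h ▸ hyA)
      -- non-adjacency facts
      have auv : ¬ G.Adj u v := hBind u huB v hvB
      have aux' : ¬ G.Adj u x := hBind u huB x hxB
      have auy : ¬ G.Adj u y := hBind u huB y hyB
      have avx : ¬ G.Adj v x := hBind v hvB x hxB
      have avy : ¬ G.Adj v y := hBind v hvB y hyB
      have axy : ¬ G.Adj x y := hBind x hxB y hyB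
      have avu : ¬ G.Adj v u := fun h => auv h.symm
      have axu : ¬ G.Adj x u := fun h => aux' h.symm
      have ayu : ¬ G.Adj y u := fun h => auy h.symm
      have axv : ¬ G.Adj x v := fun h => avx h.symm
      have ayv : ¬ G.Adj y v := fun h => avy h.symm
      have ayx : ¬ G.Adj y x := fun h => axy h.symm
      have auw : ¬ G.Adj u w := fun h => huA h.symm
      have avw : ¬ G.Adj v w := fun h => hvA h.symm
      have awu : ¬ G.Adj w u := huA
      have awv : ¬ G.Adj w v := hvA
      have awx : G.Adj w x := hxA
      have awy : G.Adj w y := hyA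
      have axw : G.Adj x w := hxA.symm
      have ayw : G.Adj y w := hyA.symm
      refine ⟨f, ?_, ?_, ?_⟩
      · intro a b hab
        fin_cases a <;> fin_cases b <;>
          first
            | rfl
            | (exfalso; revert hab; simp only [hf]; simp;
               first | assumption | (intro h; first
                 | exact huv h | exact hxy h | exact nuw h | exact nvw h
                 | exact nxw h | exact nyw h | exact nux h | exact nuy h
                 | exact nvx h | exact nvy h
                 | exact huv h.symm | exact hxy h.symm | exact nuw h.symm
                 | exact nvw h.symm | exact nxw h.symm | exact nyw h.symm
                 | exact nux h.symm | exact nuy h.symm | exact nvx h.symm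
                 | exact nvy h.symm))
      · intro a b
        rw [hGadj]
        fin_cases a <;> fin_cases b <;>
          simp only [hf] <;> simp <;>
          first | assumption | exact fun h => G.loopless _ h
      · intro a
        fin_cases a <;> simp only [hf] <;> simp <;> assumption
  refine ⟨hdeg, ?_⟩
  rw [hG₁] at hdeg hG1bw ⊢
  exact star_comps _ B hG1bw hdeg
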